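/- Let g ≥ 0, let b_1, b_2 ∈ ℂ[λ] be coprime polynomials of degree exactly g+1, and let a ∈ ℂ[λ] have degree at most 2g. Let A, B, C, D ∈ ℝ with AD − BC ≠ 0, and set b̃_1 = A·b_1 + B·b_2, b̃_2 = C·b_1 + D·b_2. Assume that b_1 and b̃_1 each have degree exactly g+1 and each have g+1 pairwise distinct roots. Then the sum over the roots β of b̃_1 of a(β)/(b̃_1'(β)·b̃_2(β)) equals 1/(AD − BC) times the sum over the roots β of b_1 of a(β)/(b_1'(β)·b_2(β)). -/

import Mathlib

open Polynomial

lemma basis_coeff (s : Finset ℂ) (β : ℂ) (hβ : β ∈ s) :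
    (Lagrange.basis s id β).coeff (s.card - 1) = Lagrange.nodalWeight s id β := by
  have hvs : Set.InjOn (id : ℂ → ℂ) s := Set.injOn_id _
  have hdeg := Lagrange.degree_basis hvs hβ
  have hnd : (Lagrange.basis s id β).natDegree = s.card - 1 :=
    natDegree_eq_of_degree_eq_some hdeg
  rw [← hnd, coeff_natDegree]
  unfold Lagrange.basis Lagrange.nodalWeight
  rw [leadingCoeff_prod]
  refine Finset.prod_congr rfl fun j hj => ?_
  unfold Lagrange.basisDivisor
  rw [leadingCoeff_mul, leadingCoeff_C, (monic_X_sub_C _).leadingCoeff, mul_one]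

lemma lagrange_sum_coeff (s : Finset ℂ) (f : Polynomial ℂ) (hf : f.degree < s.card) :
    f.coeff (s.card - 1) = ∑ β ∈ s, f.eval β * Lagrange.nodalWeight s id β := by
  have hvs : Set.InjOn (id : ℂ → ℂ) s := Set.injOn_id _
  conv_lhs => rw [Lagrange.eq_interpolate hvs hf]
  rw [Lagrange.interpolate_apply, finset_sum_coeff]
  exact Finset.sum_congr rfl fun β hβ => by rw [coeff_C_mul, basis_coeff s β hβ, id]

lemma key_lagrange (n : ℕ) (p f : Polynomial ℂ) (hp : p.degree = (n + 1 : ℕ))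
    (hnodup : p.roots.Nodup) (hf : f.degree < ((n + 1 : ℕ) : WithBot ℕ)) :
    ∑ β ∈ p.roots.toFinset, f.eval β / (derivative p).eval β
      = f.coeff n / p.leadingCoeff := by
  have hp0 : p ≠ 0 := ne_zero_of_degree_gt (n := ⊥)
    (by rw [hp]; exact_mod_cast WithBot.bot_lt_coe _)
  have hlc : p.leadingCoeff ≠ 0 := leadingCoeff_ne_zero.mpr hp0
  have hsplit : Splits p := IsAlgClosed.splits p
  have hnd : p.natDegree = n + 1 := natDegree_eq_of_degree_eq_some hp
  have hcard : p.roots.card = n + 1 := by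
    rw [splits_iff_card_roots.mp hsplit, hnd]
  set s := p.roots.toFinset with hs
  have hsval : s.val = p.roots := Multiset.toFinset_val p.roots ▸ Multiset.Nodup.dedup hnodup
  have hscard : s.card = n + 1 := by
    rw [Finset.card, hsval, hcard]
  have hnodal : p = C p.leadingCoeff * Lagrange.nodal s id := by
    conv_lhs => rw [hsplit.eq_prod_roots]
    congr 1
    rw [Lagrange.nodal, ← hsval]
    rfl
  have hderiv : ∀ β ∈ s, (derivative p).eval β
      = p.leadingCoeff * (derivative (Lagrange.nodal s id)).eval β := by
    intro β hβ
    conv_lhs => rw [hnodal]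
    rw [derivative_C_mul, eval_mul, eval_C]
  have hcoeff := lagrange_sum_coeff s f (by rw [hscard]; exact_mod_cast hf)
  rw [hscard] at hcoeff
  simp only [Nat.add_sub_cancel] at hcoeff
  rw [hcoeff, Finset.sum_div]
  refine Finset.sum_congr rfl fun β hβ => ?_
  rw [hderiv β hβ, Lagrange.nodalWeight_eq_eval_derivative_nodal (v := id) (i := β) hβ]
  show eval β f / (p.leadingCoeff * eval β (derivative (Lagrange.nodal s id)))
      = eval β f * (eval β (derivative (Lagrange.nodal s id)))⁻¹ / p.leadingCoeff
  field_simp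

lemma degree_le_of_lt_succ (p : Polynomial ℂ) (g : ℕ)
    (h : p.degree < ((g + 1 : ℕ) : WithBot ℕ)) : p.degree ≤ (g : ℕ) := by
  by_cases h0 : p = 0
  · simp [h0]
  · rw [degree_eq_natDegree h0] at h ⊢
    exact_mod_cast Nat.lt_succ_iff.mp (by exact_mod_cast h)

lemma partial_fractions (g : ℕ) (b₁ b₂ a : Polynomial ℂ)
    (hdeg1 : b₁.degree = (g + 1 : ℕ)) (hdeg2 : b₂.degree = (g + 1 : ℕ))
    (hcop : IsCoprime b₁ b₂) (ha : a.degree ≤ (2 * g : ℕ)) :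
    ∃ a₁ a₂ : Polynomial ℂ, a₁.degree ≤ (g : ℕ) ∧ a₂.degree ≤ (g : ℕ) ∧
      a = a₁ * b₂ + a₂ * b₁ := by
  obtain ⟨u, v, huv⟩ := hcop
  have hb₂0 : b₂ ≠ 0 := ne_zero_of_degree_gt (n := ⊥)
    (by rw [hdeg2]; exact_mod_cast WithBot.bot_lt_coe _)
  have hlc2 : b₂.leadingCoeff ≠ 0 := leadingCoeff_ne_zero.mpr hb₂0
  set b₂m : Polynomial ℂ := b₂ * C b₂.leadingCoeff⁻¹ with hb₂m
  have hmonic : b₂m.Monic := monic_mul_leadingCoeff_inv hb₂0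
  have hdegm : b₂m.degree = (g + 1 : ℕ) := by
    rw [hb₂m, degree_mul, degree_C (inv_ne_zero hlc2), hdeg2, add_zero]
  set a₂ : Polynomial ℂ := (a * u) %ₘ b₂m with ha₂
  have hdega₂ : a₂.degree ≤ (g : ℕ) := by
    refine degree_le_of_lt_succ _ _ ?_
    have := degree_modByMonic_lt (a * u) hmonic
    rwa [hdegm] at this
  set q : Polynomial ℂ := (a * u) /ₘ b₂m with hq
  have hdiv : a₂ + b₂m * q = a * u := modByMonic_add_div (a * u) b₂m
  set a₁ : Polynomial ℂ := C b₂.leadingCoeff⁻¹ * q * b₁ + a * v with ha₁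
  have heq : a = a₁ * b₂ + a₂ * b₁ := by
    calc a = a * (u * b₁ + v * b₂) := by rw [huv, mul_one]
    _ = (a₂ + b₂m * q) * b₁ + a * v * b₂ := by rw [hdiv]; ring
    _ = a₁ * b₂ + a₂ * b₁ := by rw [ha₁, hb₂m]; ring
  have hdega₁ : a₁.degree ≤ (g : ℕ) := by
    by_cases h0 : a₁ = 0
    · simp [h0]
    have hsub : a₁ * b₂ = a - a₂ * b₁ := by rw [heq]; ring
    have hd : (a₁ * b₂).degree ≤ ((2 * g + 1 : ℕ) : WithBot ℕ) := by
      rw [hsub]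
      refine le_trans (degree_sub_le _ _) (max_le ?_ ?_)
      · exact le_trans ha (by exact_mod_cast Nat.le_succ _)
      · rw [degree_mul, hdeg1]
        calc a₂.degree + ((g + 1 : ℕ) : WithBot ℕ)
            ≤ ((g : ℕ) : WithBot ℕ) + ((g + 1 : ℕ) : WithBot ℕ) := add_le_add_left hdega₂ _
        _ = ((2 * g + 1 : ℕ) : WithBot ℕ) := by rw [← Nat.cast_add]; congr 1; omega
    rw [degree_mul, hdeg2, degree_eq_natDegree h0, ← Nat.cast_add] at hd
    have : a₁.natDegree + (g + 1) ≤ 2 * g + 1 := by exact_mod_cast hd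
    rw [degree_eq_natDegree h0]
    exact_mod_cast Nat.le_of_lt_succ (by omega)
  exact ⟨a₁, a₂, hdega₁, hdega₂, heq⟩

theorem stmt12 (g : ℕ) (b₁ b₂ a : Polynomial ℂ)
    (hdeg1 : b₁.degree = (g + 1 : ℕ)) (hdeg2 : b₂.degree = (g + 1 : ℕ))
    (hcop : ∀ μ : ℂ, ¬ (b₁.eval μ = 0 ∧ b₂.eval μ = 0))
    (ha : a.degree ≤ (2 * g : ℕ))
    (A B C₀ D : ℝ) (hdet : A * D - B * C₀ ≠ 0)
    (hnodup1 : b₁.roots.Nodup)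
    (hdegt : ((A : ℂ) • b₁ + (B : ℂ) • b₂).degree = (g + 1 : ℕ))
    (hnodupt : ((A : ℂ) • b₁ + (B : ℂ) • b₂).roots.Nodup) :
    ∑ β ∈ ((A : ℂ) • b₁ + (B : ℂ) • b₂).roots.toFinset,
        a.eval β / ((derivative ((A : ℂ) • b₁ + (B : ℂ) • b₂)).eval β *
          ((C₀ : ℂ) • b₁ + (D : ℂ) • b₂).eval β)
      = (1 / ((A * D - B * C₀ : ℝ) : ℂ)) *
        ∑ β ∈ b₁.roots.toFinset, a.eval β / ((derivative b₁).eval β * b₂.eval β) := by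
  set Δc : ℂ := ((A * D - B * C₀ : ℝ) : ℂ) with hΔc
  have hΔ : Δc ≠ 0 := Complex.ofReal_ne_zero.mpr hdet
  have hΔexp : Δc = (A : ℂ) * (D : ℂ) - (B : ℂ) * (C₀ : ℂ) := by rw [hΔc]; push_cast; ring
  have hb₁0 : b₁ ≠ 0 := ne_zero_of_degree_gt (n := ⊥)
    (by rw [hdeg1]; exact_mod_cast WithBot.bot_lt_coe _)
  set bt₁ : Polynomial ℂ := (A : ℂ) • b₁ + (B : ℂ) • b₂ with hbt₁
  set bt₂ : Polynomial ℂ := (C₀ : ℂ) • b₁ + (D : ℂ) • b₂ with hbt₂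
  have hbt₁0 : bt₁ ≠ 0 := ne_zero_of_degree_gt (n := ⊥)
    (by rw [hdegt]; exact_mod_cast WithBot.bot_lt_coe _)
  -- coprimality
  have hcop' : IsCoprime b₁ b₂ := by
    rw [Polynomial.isCoprime_iff_aeval_ne_zero_of_isAlgClosed (k := ℂ) ℂ]
    intro μ
    have := hcop μ
    simp only [Polynomial.aeval_def, Polynomial.eval₂_eq_eval_map, Algebra.algebraMap_self,
      Polynomial.map_id]
    tauto
  obtain ⟨a₁, a₂, hdega₁, hdega₂, heq⟩ := partial_fractions g b₁ b₂ a hdeg1 hdeg2 hcop' ha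
  -- tilde decomposition
  set at₁ : Polynomial ℂ := Δc⁻¹ • ((A : ℂ) • a₁ - (B : ℂ) • a₂) with hat₁
  set at₂ : Polynomial ℂ := Δc⁻¹ • ((D : ℂ) • a₂ - (C₀ : ℂ) • a₁) with hat₂
  have hta : a = at₁ * bt₂ + at₂ * bt₁ := by
    rw [hat₁, hat₂, hbt₁, hbt₂]
    simp only [smul_eq_C_mul]
    have expand : (C (A : ℂ) * a₁ - C (B : ℂ) * a₂) * (C (C₀ : ℂ) * b₁ + C (D : ℂ) * b₂)
        + (C (D : ℂ) * a₂ - C (C₀ : ℂ) * a₁) * (C (A : ℂ) * b₁ + C (B : ℂ) * b₂)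
        = C Δc * (a₁ * b₂ + a₂ * b₁) := by
      rw [hΔexp, map_sub, map_mul, map_mul]
      ring
    calc a = a₁ * b₂ + a₂ * b₁ := heq
    _ = C Δc⁻¹ * (C Δc * (a₁ * b₂ + a₂ * b₁)) := by
        rw [← mul_assoc, ← map_mul, inv_mul_cancel₀ hΔ, map_one, one_mul]
    _ = _ := by rw [← expand]; ring
  have hdegat₁ : at₁.degree ≤ (g : ℕ) := by
    refine le_trans (degree_smul_le _ _) (le_trans (degree_sub_le _ _) (max_le ?_ ?_))
    · exact le_trans (degree_smul_le _ _) hdega₁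
    · exact le_trans (degree_smul_le _ _) hdega₂
  -- no common roots of bt₁, bt₂
  have hcopt : ∀ μ : ℂ, bt₁.eval μ = 0 → bt₂.eval μ ≠ 0 := by
    intro μ h1 h2
    rw [hbt₁] at h1; rw [hbt₂] at h2
    simp only [eval_add, eval_smul, smul_eq_mul] at h1 h2
    have he1 : b₁.eval μ = 0 := by
      have h3 : Δc * b₁.eval μ = 0 := by
        rw [hΔexp]; linear_combination (D : ℂ) * h1 - (B : ℂ) * h2
      exact (mul_eq_zero.mp h3).resolve_left hΔ
    have he2 : b₂.eval μ = 0 := by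
      have h3 : Δc * b₂.eval μ = 0 := by
        rw [hΔexp]; linear_combination (A : ℂ) * h2 - (C₀ : ℂ) * h1
      exact (mul_eq_zero.mp h3).resolve_left hΔ
    exact hcop μ ⟨he1, he2⟩
  -- rewrite LHS sum
  have hL : ∑ β ∈ bt₁.roots.toFinset,
      a.eval β / ((derivative bt₁).eval β * bt₂.eval β)
      = ∑ β ∈ bt₁.roots.toFinset, at₁.eval β / (derivative bt₁).eval β := by
    refine Finset.sum_congr rfl fun β hβ => ?_
    have hroot : bt₁.eval β = 0 := by
      rw [Multiset.mem_toFinset, mem_roots hbt₁0] at hβ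
      exact hβ
    have hne : bt₂.eval β ≠ 0 := hcopt β hroot
    have hval : a.eval β = at₁.eval β * bt₂.eval β := by
      rw [hta]
      simp [eval_add, eval_mul, hroot]
    rw [hval, mul_div_mul_right _ _ hne]
  -- rewrite RHS sum
  have hR : ∑ β ∈ b₁.roots.toFinset,
      a.eval β / ((derivative b₁).eval β * b₂.eval β)
      = ∑ β ∈ b₁.roots.toFinset, a₁.eval β / (derivative b₁).eval β := by
    refine Finset.sum_congr rfl fun β hβ => ?_
    have hroot : b₁.eval β = 0 := by
      rw [Multiset.mem_toFinset, mem_roots hb₁0] at hβ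
      exact hβ
    have hne : b₂.eval β ≠ 0 := fun h => hcop β ⟨hroot, h⟩
    have hval : a.eval β = a₁.eval β * b₂.eval β := by
      rw [heq]
      simp [eval_add, eval_mul, hroot]
    rw [hval, mul_div_mul_right _ _ hne]
  rw [hL, hR,
    key_lagrange g bt₁ at₁ hdegt hnodupt
      (lt_of_le_of_lt hdegat₁ (by exact_mod_cast Nat.lt_succ_self g)),
    key_lagrange g b₁ a₁ hdeg1 hnodup1
      (lt_of_le_of_lt hdega₁ (by exact_mod_cast Nat.lt_succ_self g))]
  -- scalar computation
  have hnd1 : b₁.natDegree = g + 1 := natDegree_eq_of_degree_eq_some hdeg1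
  have hnd2 : b₂.natDegree = g + 1 := natDegree_eq_of_degree_eq_some hdeg2
  have hndt : bt₁.natDegree = g + 1 := natDegree_eq_of_degree_eq_some hdegt
  set L₁ : ℂ := b₁.coeff (g + 1) with hL₁
  set L₂ : ℂ := b₂.coeff (g + 1) with hL₂
  have hlc1 : b₁.leadingCoeff = L₁ := by rw [leadingCoeff, hnd1]
  have hlct : bt₁.leadingCoeff = (A : ℂ) * L₁ + (B : ℂ) * L₂ := by
    rw [leadingCoeff, hndt, hbt₁]
    simp [coeff_add, coeff_smul, smul_eq_mul]
    rfl
  have hL₁0 : L₁ ≠ 0 := by rw [← hlc1]; exact leadingCoeff_ne_zero.mpr hb₁0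
  have hLt0 : (A : ℂ) * L₁ + (B : ℂ) * L₂ ≠ 0 := by
    rw [← hlct]; exact leadingCoeff_ne_zero.mpr hbt₁0
  -- coefficient relation
  have hco : a₁.coeff g * L₂ + a₂.coeff g * L₁ = 0 := by
    have h0 : a.coeff (2 * g + 1) = 0 := coeff_eq_zero_of_degree_lt
      (lt_of_le_of_lt ha (by exact_mod_cast Nat.lt_succ_self _))
    have e1 : (a₁ * b₂).coeff (g + (g + 1)) = a₁.coeff g * b₂.coeff (g + 1) :=
      coeff_mul_add_eq_of_natDegree_le (natDegree_le_iff_degree_le.mpr hdega₁)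
        (le_of_eq hnd2)
    have e2 : (a₂ * b₁).coeff (g + (g + 1)) = a₂.coeff g * b₁.coeff (g + 1) :=
      coeff_mul_add_eq_of_natDegree_le (natDegree_le_iff_degree_le.mpr hdega₂)
        (le_of_eq hnd1)
    rw [heq, show 2 * g + 1 = g + (g + 1) from by omega, coeff_add, e1, e2] at h0
    exact h0
  have hcat₁ : at₁.coeff g = Δc⁻¹ * ((A : ℂ) * a₁.coeff g - (B : ℂ) * a₂.coeff g) := by
    rw [hat₁]
    simp [coeff_smul, coeff_sub, smul_eq_mul]
  rw [hcat₁, hlct, hlc1]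
  field_simp
  ring_nf
  linear_combination (-(B : ℂ)) * hco
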